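/- Let f(x_1,...,x_m) be a symmetric polynomial over the complex numbers such that f vanishes whenever s of its arguments are all equal to a fixed constant a (i.e. f(a,...,a,x_{s+1},...,x_m)=0 identically). Then the one-variable polynomial f(x,x,...,x) is divisible by (x-a)^{m-s+1}. -/

import Mathlib

open MvPolynomial

/-- Coefficient of a "low-free" monomial after substituting `0` for the low variables. -/
private lemma coeff_aeval_lowzero (m s : ℕ) (h : MvPolynomial (Fin m) ℂ)
    (β : Fin m →₀ ℕ) (hβ : ∀ i : Fin m, (i : ℕ) < s → β i = 0) :
    coeff β (aeval (fun i : Fin m =>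
      if (i : ℕ) < s then (0 : MvPolynomial (Fin m) ℂ) else X i) h) = coeff β h := by
  conv_lhs => rw [h.as_sum, map_sum]
  have key : ∀ γ : Fin m →₀ ℕ,
      (aeval (fun i : Fin m => if (i : ℕ) < s then (0 : MvPolynomial (Fin m) ℂ) else X i))
        (monomial γ (coeff γ h))
      = if (∀ i : Fin m, (i : ℕ) < s → γ i = 0) then monomial γ (coeff γ h) else 0 := by
    intro γ
    rw [aeval_monomial]
    split_ifs with hγ
    · have hc : ∀ i ∈ γ.support,
          (if (i:ℕ) < s then (0 : MvPolynomial (Fin m) ℂ) else X i) ^ γ i = X i ^ γ i := by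
        intro i hi
        have hns : ¬ ((i:ℕ) < s) := fun hlt => (Finsupp.mem_support_iff.mp hi) (hγ i hlt)
        simp [hns]
      rw [Finsupp.prod_congr hc, monomial_eq]
      rfl
    · push_neg at hγ
      obtain ⟨i, hi, hne⟩ := hγ
      have hmem : i ∈ γ.support := Finsupp.mem_support_iff.mpr hne
      rw [Finsupp.prod]
      rw [Finset.prod_eq_zero hmem (by simp [hi, zero_pow hne])]
      ring
  rw [Finset.sum_congr rfl fun γ _ => key γ]
  have key2 : ∀ γ ∈ h.support,
      (if (∀ i : Fin m, (i : ℕ) < s → γ i = 0)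
        then (monomial γ (coeff γ h)) else 0).coeff β
      = if γ = β then coeff γ h else 0 := by
    intro γ _
    split_ifs with h1 h2 h2
    · rw [h2, coeff_monomial, if_pos rfl]
    · rw [coeff_monomial, if_neg h2]
    · exact absurd (h2 ▸ hβ) h1
    · simp
  rw [MvPolynomial.coeff_sum, Finset.sum_congr rfl key2, Finset.sum_ite_eq' h.support β]
  split_ifs with hmem
  · rfl
  · exact (MvPolynomial.notMem_support_iff.mp hmem).symm

theorem diagonal_divisibility (m s : ℕ) (hs : 1 ≤ s) (hsm : s ≤ m) (a : ℂ)
    (f : MvPolynomial (Fin m) ℂ) (hsym : f.IsSymmetric)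
    (hvan : aeval (fun i : Fin m =>
      if (i : ℕ) < s then (C a : MvPolynomial (Fin m) ℂ) else X i) f = 0) :
    (Polynomial.X - Polynomial.C a) ^ (m - s + 1) ∣
      aeval (fun _ : Fin m => (Polynomial.X : Polynomial ℂ)) f := by
  set f' : MvPolynomial (Fin m) ℂ := aeval (fun i : Fin m => X i + C a) f with hf'
  -- f' is symmetric
  have hsym' : f'.IsSymmetric := by
    intro σ
    rw [hf', ← AlgHom.comp_apply, comp_aeval]
    have : (fun i : Fin m => rename σ (X i + C a))
        = (fun i : Fin m => X i + C a) ∘ σ := by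
      funext i; simp
    rw [this, ← aeval_rename, hsym σ]
  -- f' vanishes when the low variables are set to 0
  have hvan' : aeval (fun i : Fin m =>
      if (i : ℕ) < s then (0 : MvPolynomial (Fin m) ℂ) else X i) f' = 0 := by
    rw [hf', ← AlgHom.comp_apply, comp_aeval]
    have : (fun i : Fin m =>
        (aeval fun i : Fin m => if (i:ℕ) < s then (0 : MvPolynomial (Fin m) ℂ) else X i)
          (X i + C a))
        = (fun i : Fin m =>
          (aeval fun i : Fin m => X i + C a)
            (if (i:ℕ) < s then (C a : MvPolynomial (Fin m) ℂ) else X i)) := by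
      funext i; split_ifs with hi <;> simp [hi]
    rw [this, ← comp_aeval, AlgHom.comp_apply, hvan, map_zero]
  -- every monomial in the support of f' has many variables
  have hsupp : ∀ α ∈ f'.support, m - s + 1 ≤ α.support.card := by
    intro α hα
    by_contra hlt
    push_neg at hlt
    have hcard : α.support.card ≤ m - s := Nat.lt_succ_iff.mp hlt
    set H : Finset (Fin m) := Finset.univ.filter (fun i => s ≤ (i:ℕ)) with hH
    have hHcard : H.card = m - s := by
      have : H.map Fin.valEmbedding = Finset.Ico s m := by
        ext n
        simp only [hH, Finset.mem_map, Finset.mem_filter, Finset.mem_univ, true_and,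
          Finset.mem_Ico, Fin.valEmbedding_apply]
        constructor
        · rintro ⟨i, hi, rfl⟩; exact ⟨hi, i.isLt⟩
        · rintro ⟨h1, h2⟩; exact ⟨⟨n, h2⟩, h1, rfl⟩
      have := congrArg Finset.card this
      rwa [Finset.card_map, Nat.card_Ico] at this
    obtain ⟨T', hT'sub, hT'card⟩ := Finset.exists_subset_card_eq (hHcard ▸ hcard)
    have e : {x // x ∈ α.support} ≃ {x // x ∈ T'} :=
      Fintype.equivOfCardEq (by rw [Fintype.card_coe, Fintype.card_coe, hT'card])
    set σ := e.extendSubtype with hσ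
    set β : Fin m →₀ ℕ := Finsupp.mapDomain σ α with hβ
    have hβlow : ∀ i : Fin m, (i : ℕ) < s → β i = 0 := by
      intro i hi
      by_contra hne
      have : i ∈ β.support := Finsupp.mem_support_iff.mpr hne
      have : i ∈ α.support.image σ := Finsupp.mapDomain_support this
      obtain ⟨j, hj, rfl⟩ := Finset.mem_image.mp this
      have : σ j ∈ T' := e.extendSubtype_mem j hj
      have : s ≤ ((σ j : Fin m) : ℕ) := by
        have := hT'sub this
        simpa [hH] using this
      omega
    have hcoeff : coeff β f' = coeff α f' := by
      conv_lhs => rw [← hsym' σ]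
      exact coeff_rename_mapDomain σ σ.injective f' α
    have hαne : coeff α f' ≠ 0 := MvPolynomial.mem_support_iff.mp hα
    have : coeff β f' = 0 := by
      have := coeff_aeval_lowzero m s f' β hβlow
      rw [hvan'] at this
      simpa using this.symm
    exact hαne (hcoeff ▸ this)
  -- recover the diagonal of f from f'
  have hrec : aeval (fun _ : Fin m => (Polynomial.X : Polynomial ℂ)) f
      = aeval (fun _ : Fin m => (Polynomial.X - Polynomial.C a : Polynomial ℂ)) f' := by
    rw [hf', ← AlgHom.comp_apply, comp_aeval]
    have hfun : (fun i : Fin m =>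
        (aeval fun _ : Fin m => (Polynomial.X - Polynomial.C a : Polynomial ℂ)) (X i + C a))
        = fun _ : Fin m => (Polynomial.X : Polynomial ℂ) := by
      funext i
      rw [map_add, aeval_X, aeval_C, Polynomial.algebraMap_eq]
      ring
    rw [hfun]
  rw [hrec]
  conv_rhs => rw [f'.as_sum, map_sum]
  apply Finset.dvd_sum
  intro α hα
  rw [aeval_monomial]
  apply Dvd.dvd.mul_left
  rw [Finsupp.prod, Finset.prod_pow_eq_pow_sum]
  apply pow_dvd_pow
  calc m - s + 1 ≤ α.support.card := hsupp α hα
    _ = ∑ _i ∈ α.support, 1 := by rw [Finset.card_eq_sum_ones]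
    _ ≤ α.support.sum fun i => α i := Finset.sum_le_sum fun i hi =>
        Nat.one_le_iff_ne_zero.mpr (Finsupp.mem_support_iff.mp hi)
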